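/- Let H be a Hilbert space and F : H → ℝ a norm-continuous functional that is weakly lower semicontinuous, i.e. F(u) ≤ liminf F(u_n) whenever u_n ⇀ u. Let V₀ ⊆ V₁ ⊆ ⋯ be closed subspaces with dense union in a closed subspace V_∞, and let K ⊆ H be weakly closed with the approximation property: for every u ∈ V_∞ ∩ K there exist u_k ∈ V_k ∩ K with u_k → u. If for each k, Φ_k minimizes F over V_k ∩ K, and the Φ_k lie in a bounded set and every weak limit of a subsequence lies in V_∞ ∩ K, then lim_{k→∞} F(Φ_k) = min_{u ∈ V_∞ ∩ K} F(u). -/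

import Mathlib

open Filter
open scoped RealInnerProductSpace

/-- Every norm-bounded sequence in a real Hilbert space has a weakly convergent
subsequence. -/
lemma exists_weak_subseq {H : Type*} [NormedAddCommGroup H] [InnerProductSpace ℝ H]
    [CompleteSpace H] (u : ℕ → H) (C : ℝ) (hC : ∀ n, ‖u n‖ ≤ C) :
    ∃ φ : ℕ → ℕ, StrictMono φ ∧ ∃ v : H,
      ∀ f : H →L[ℝ] ℝ, Tendsto (fun n => f (u (φ n))) atTop (nhds (f v)) := by
  classical
  have hC0 : 0 ≤ C := le_trans (norm_nonneg _) (hC 0)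
  -- diagonal extraction via compactness of a countable product of intervals
  set g : ℕ → ℕ → ℝ := (fun n m => ⟪u m, u n⟫ : ℕ → ℕ → ℝ) with hg_def
  have hcomp : IsCompact (Set.pi Set.univ fun _ : ℕ => Set.Icc (-(C*C)) (C*C)) :=
    isCompact_univ_pi fun _ => isCompact_Icc
  have hgmem : ∀ n, g n ∈ Set.pi Set.univ fun _ : ℕ => Set.Icc (-(C*C)) (C*C) := by
    intro n m _
    have h1 : |⟪u m, u n⟫| ≤ ‖u m‖ * ‖u n‖ := abs_real_inner_le_norm _ _
    have h2 : ‖u m‖ * ‖u n‖ ≤ C * C :=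
      mul_le_mul (hC m) (hC n) (norm_nonneg _) hC0
    have := abs_le.mp (h1.trans h2)
    exact ⟨this.1, this.2⟩
  obtain ⟨x, -, φ, hφ, hx⟩ := hcomp.tendsto_subseq hgmem
  refine ⟨φ, hφ, ?_⟩
  set y : ℕ → H := (fun n => u (φ n)) with hy_def
  have hyC : ∀ n, ‖y n‖ ≤ C := fun n => hC (φ n)
  have hx' : ∀ m, Tendsto (fun n => ⟪u m, y n⟫) atTop (nhds (x m)) := by
    intro m
    have := (tendsto_pi_nhds.mp hx) m
    simpa [Function.comp, hg_def, hy_def] using this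
  -- the set of vectors z for which ⟪z, y n⟫ converges
  set S : Set H := {z : H | ∃ l : ℝ, Tendsto (fun n => ⟪z, y n⟫) atTop (nhds l)} with hS_def
  have hSspan : ∀ z ∈ Submodule.span ℝ (Set.range u), z ∈ S := by
    intro z hz
    induction hz using Submodule.span_induction with
    | mem z hz => obtain ⟨m, rfl⟩ := hz; exact ⟨x m, hx' m⟩
    | zero => exact ⟨0, by simpa using (tendsto_const_nhds : Tendsto (fun _ : ℕ => (0:ℝ)) atTop _)⟩
    | add a b _ _ ha hb =>
        obtain ⟨la, hla⟩ := ha; obtain ⟨lb, hlb⟩ := hb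
        exact ⟨la + lb, by simpa [inner_add_left] using hla.add hlb⟩
    | smul r a _ ha =>
        obtain ⟨la, hla⟩ := ha
        exact ⟨r * la, by simpa [real_inner_smul_left] using hla.const_mul r⟩
  have hSclosure : ∀ z ∈ closure ((Submodule.span ℝ (Set.range u) : Submodule ℝ H) : Set H),
      z ∈ S := by
    intro z hz
    have hcau : CauchySeq (fun n => ⟪z, y n⟫) := by
      rw [Metric.cauchySeq_iff']
      intro ε hε
      have hδ : (0:ℝ) < ε / (4 * (C + 1)) := by positivity
      obtain ⟨z', hz'mem, hz'close⟩ := Metric.mem_closure_iff.mp hz _ hδ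
      obtain ⟨l', hl'⟩ := hSspan z' hz'mem
      have hcau' : CauchySeq (fun n => ⟪z', y n⟫) := hl'.cauchySeq
      obtain ⟨N, hN⟩ := Metric.cauchySeq_iff'.mp hcau' (ε/2) (by positivity)
      refine ⟨N, fun n hn => ?_⟩
      have key : ∀ k, dist (⟪z, y k⟫) (⟪z', y k⟫) ≤ ε / 4 := by
        intro k
        have : dist (⟪z, y k⟫) (⟪z', y k⟫) = |⟪z - z', y k⟫| := by
          rw [Real.dist_eq, ← inner_sub_left]
        rw [this]
        have h1 : |⟪z - z', y k⟫| ≤ ‖z - z'‖ * ‖y k‖ := abs_real_inner_le_norm _ _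
        have h2 : ‖z - z'‖ * ‖y k‖ ≤ (ε / (4 * (C + 1))) * (C + 1) := by
          apply mul_le_mul _ ((hyC k).trans (by linarith)) (norm_nonneg _) (le_of_lt hδ)
          rw [← dist_eq_norm]
          exact le_of_lt hz'close
        have h3 : (ε / (4 * (C + 1))) * (C + 1) = ε / 4 := by
          field_simp
        linarith [h1.trans h2]
      calc dist (⟪z, y n⟫) (⟪z, y N⟫)
          ≤ dist (⟪z, y n⟫) (⟪z', y n⟫) + dist (⟪z', y n⟫) (⟪z', y N⟫)
            + dist (⟪z', y N⟫) (⟪z, y N⟫) := dist_triangle4 _ _ _ _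
        _ < ε / 4 + ε / 2 + ε / 4 := by
            have := hN n hn
            have k1 := key n
            have k2 := key N
            rw [dist_comm (⟪z', y N⟫)] at *
            linarith
        _ = ε := by ring
    exact cauchySeq_tendsto_of_complete hcau
  -- every vector is in S, using the orthogonal projection onto the closed span
  set M : Submodule ℝ H := (Submodule.span ℝ (Set.range u)).topologicalClosure with hM_def
  haveI : CompleteSpace M :=
    (Submodule.isClosed_topologicalClosure _).completeSpace_coe
  have hyM : ∀ n, y n ∈ M :=
    fun n => Submodule.le_topologicalClosure _ (Submodule.subset_span ⟨φ n, rfl⟩)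
  have hSall : ∀ z : H, z ∈ S := by
    intro z
    have hPmem : ((M.orthogonalProjectionOnto z : M) : H) ∈
        closure ((Submodule.span ℝ (Set.range u) : Submodule ℝ H) : Set H) := by
      exact (M.orthogonalProjectionOnto z).2
    obtain ⟨l, hl⟩ := hSclosure _ hPmem
    refine ⟨l, hl.congr fun n => ?_⟩
    have horth : z - (M.orthogonalProjectionOnto z : H) ∈ Mᗮ :=
      Submodule.sub_starProjection_mem_orthogonal z
    have h0 : ⟪z - (M.orthogonalProjectionOnto z : H), y n⟫ = 0 :=
      (Submodule.mem_orthogonal' M _).mp horth (y n) (hyM n)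
    have := inner_sub_left (𝕜 := ℝ) z ((M.orthogonalProjectionOnto z : H)) (y n)
    linarith [this, h0]
  -- build the limiting continuous linear functional
  choose l hl using hSall
  have hlbound : ∀ z : H, ‖l z‖ ≤ C * ‖z‖ := by
    intro z
    have habs : Tendsto (fun n => |⟪z, y n⟫|) atTop (nhds |l z|) := (hl z).abs
    refine le_of_tendsto' habs fun n => ?_
    calc |⟪z, y n⟫| ≤ ‖z‖ * ‖y n‖ := abs_real_inner_le_norm _ _
      _ ≤ ‖z‖ * C := by
          exact mul_le_mul_of_nonneg_left (hyC n) (norm_nonneg _)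
      _ = C * ‖z‖ := mul_comm _ _
  have hladd : ∀ a b : H, l (a + b) = l a + l b := by
    intro a b
    refine tendsto_nhds_unique (hl (a + b)) ?_
    have := (hl a).add (hl b)
    refine Tendsto.congr (fun n => ?_) this
    rw [inner_add_left]
  have hlsmul : ∀ (r : ℝ) (a : H), l (r • a) = r * l a := by
    intro r a
    refine tendsto_nhds_unique (hl (r • a)) ?_
    have := (hl a).const_mul r
    refine Tendsto.congr (fun n => ?_) this
    rw [real_inner_smul_left]
  set Llin : H →ₗ[ℝ] ℝ :=
    { toFun := l, map_add' := hladd, map_smul' := hlsmul } with hLlin_def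
  set L : H →L[ℝ] ℝ := LinearMap.mkContinuous Llin C hlbound with hL_def
  set v : H := (InnerProductSpace.toDual ℝ H).symm L with hv_def
  have hvL : ∀ z : H, ⟪v, z⟫ = L z := by
    intro z
    have : InnerProductSpace.toDual ℝ H v = L := by
      rw [hv_def]; exact (InnerProductSpace.toDual ℝ H).apply_symm_apply L
    rw [← this]; rfl
  refine ⟨v, fun f => ?_⟩
  set z : H := (InnerProductSpace.toDual ℝ H).symm f with hz_def
  have hfz : ∀ w : H, f w = ⟪z, w⟫ := by
    intro w
    have : InnerProductSpace.toDual ℝ H z = f := by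
      rw [hz_def]; exact (InnerProductSpace.toDual ℝ H).apply_symm_apply f
    rw [← this]; rfl
  have hfv : f v = l z := by
    rw [hfz v, real_inner_comm, hvL z]
    rfl
  rw [hfv]
  exact Tendsto.congr (fun n => (hfz (y n)).symm) (hl z)

/-- Weak convergence in a Hilbert space, tested against continuous linear functionals. -/
def WeakConv {H : Type*} [NormedAddCommGroup H] [InnerProductSpace ℝ H]
    (u : ℕ → H) (v : H) : Prop :=
  ∀ f : H →L[ℝ] ℝ, Tendsto (fun n => f (u n)) atTop (nhds (f v))

theorem stmt_12 {H : Type*} [NormedAddCommGroup H] [InnerProductSpace ℝ H]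
    [CompleteSpace H]
    (F : H → ℝ) (hFcont : Continuous F)
    (hFwlsc : ∀ (u : ℕ → H) (v : H), WeakConv u v → F v ≤ liminf (fun n => F (u n)) atTop)
    (V : ℕ → Submodule ℝ H) (hVmono : Monotone V)
    (hVclosed : ∀ k, IsClosed (V k : Set H))
    (Vinf : Submodule ℝ H) (hVinfclosed : IsClosed (Vinf : Set H))
    (hdense : closure (⋃ k, (V k : Set H)) = (Vinf : Set H))
    (K : Set H)
    (hKweaklyClosed : ∀ (u : ℕ → H) (v : H), (∀ n, u n ∈ K) → WeakConv u v → v ∈ K)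
    (happrox : ∀ u ∈ (Vinf : Set H) ∩ K,
      ∃ w : ℕ → H, (∀ k, w k ∈ (V k : Set H) ∩ K) ∧ Tendsto w atTop (nhds u))
    (Φ : ℕ → H)
    (hΦmem : ∀ k, Φ k ∈ (V k : Set H) ∩ K)
    (hΦmin : ∀ k, ∀ v ∈ (V k : Set H) ∩ K, F (Φ k) ≤ F v)
    (hΦbdd : ∃ C, ∀ k, ‖Φ k‖ ≤ C)
    (hweaklim : ∀ (φ : ℕ → ℕ), StrictMono φ → ∀ v : H,
      WeakConv (fun k => Φ (φ k)) v → v ∈ (Vinf : Set H) ∩ K) :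
    ∃ u ∈ (Vinf : Set H) ∩ K, (∀ v ∈ (Vinf : Set H) ∩ K, F u ≤ F v) ∧
      Tendsto (fun k => F (Φ k)) atTop (nhds (F u)) := by
  obtain ⟨C, hC⟩ := hΦbdd
  obtain ⟨φ, hφ, v, hv⟩ := exists_weak_subseq Φ C hC
  have hvK : v ∈ (Vinf : Set H) ∩ K := hweaklim φ hφ v hv
  obtain ⟨w, hw, hwt⟩ := happrox v hvK
  have hFw : Tendsto (fun k => F (w k)) atTop (nhds (F v)) :=
    (hFcont.tendsto v).comp hwt
  have hupper : ∀ k, F (Φ k) ≤ F (w k) := fun k => hΦmin k (w k) (hw k)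
  have hanti : Antitone fun k => F (Φ k) := by
    intro k k' hkk'
    exact hΦmin k' (Φ k) ⟨hVmono hkk' (hΦmem k).1, (hΦmem k).2⟩
  -- lower bound : F v ≤ F (Φ k) for all k
  have hlow : ∀ k, F v ≤ F (Φ k) := by
    by_contra hcon
    push_neg at hcon
    obtain ⟨k₀, hk₀⟩ := hcon
    set c : ℝ := (F (Φ k₀) + F v) / 2 with hc_def
    have hc1 : F (Φ k₀) < c := by simp only [hc_def]; linarith
    have hc2 : c < F v := by simp only [hc_def]; linarith
    -- pick N so that beyond it the approximants have F-value above c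
    have hev : ∀ᶠ j in atTop, c < F (w j) := hFw.eventually (eventually_gt_nhds hc2)
    obtain ⟨N₁, hN₁⟩ := eventually_atTop.mp hev
    set N : ℕ := max N₁ k₀ with hN_def
    set q : ℕ → ℕ := fun j => j + N with hq_def
    have hq1 : ∀ j, c < F (w (q j)) := fun j => hN₁ _ (le_trans (le_max_left _ _) (Nat.le_add_left N j))
    have hq2 : ∀ j, F (Φ (φ (q j))) < c := by
      intro j
      have h1 : k₀ ≤ φ (q j) :=
        le_trans (le_trans (le_max_right N₁ k₀) (Nat.le_add_left N j)) (hφ.le_apply)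
      exact lt_of_le_of_lt (hanti h1) hc1
    -- intermediate value theorem on the segment from w (q j) to Φ (φ (q j))
    have hivt : ∀ j, ∃ t : ℝ, t ∈ Set.Icc (0:ℝ) 1 ∧
        F (w (q j) + t • (Φ (φ (q j)) - w (q j))) = c := by
      intro j
      set p : ℝ → H := fun t => w (q j) + t • (Φ (φ (q j)) - w (q j)) with hp_def
      have hpc : Continuous p := by
        apply Continuous.add continuous_const
        exact (continuous_id.smul continuous_const)
      have hmem : c ∈ Set.Icc (F (p 1)) (F (p 0)) := by
        constructor
        · have : p 1 = Φ (φ (q j)) := by simp [hp_def]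
          rw [this]; exact le_of_lt (hq2 j)
        · have : p 0 = w (q j) := by simp [hp_def]
          rw [this]; exact le_of_lt (hq1 j)
      have := intermediate_value_Icc' (le_of_lt one_pos) ((hFcont.comp hpc).continuousOn)
      obtain ⟨t, ht, htc⟩ := this hmem
      exact ⟨t, ht, htc⟩
    choose t ht1 ht2 using hivt
    -- extract a convergent subsequence of t
    obtain ⟨t₀, -, ψ, hψ, htψ⟩ := (isCompact_Icc.tendsto_subseq ht1)
    -- the deformed sequence converges weakly to v
    set z : ℕ → H := fun j => w (q (ψ j)) + t (ψ j) • (Φ (φ (q (ψ j))) - w (q (ψ j)))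
      with hz_def
    have hqψ : Tendsto (fun j => q (ψ j)) atTop atTop := by
      apply tendsto_atTop_mono (fun j => le_trans (hψ.le_apply) (Nat.le_add_right _ N))
      exact tendsto_id
    have hzweak : WeakConv z v := by
      intro f
      have hfw : Tendsto (fun j => f (w (q (ψ j)))) atTop (nhds (f v)) :=
        ((f.continuous.tendsto v).comp hwt).comp hqψ
      have hfΦ : Tendsto (fun j => f (Φ (φ (q (ψ j))))) atTop (nhds (f v)) :=
        (hv f).comp hqψ
      have htt : Tendsto (fun j => t (ψ j)) atTop (nhds t₀) := htψ
      have hmain : Tendsto (fun j => f (w (q (ψ j))) +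
          t (ψ j) * (f (Φ (φ (q (ψ j)))) - f (w (q (ψ j))))) atTop
          (nhds (f v + t₀ * (f v - f v))) :=
        hfw.add (htt.mul (hfΦ.sub hfw))
      have heq : ∀ j, f (z j) = f (w (q (ψ j))) +
          t (ψ j) * (f (Φ (φ (q (ψ j)))) - f (w (q (ψ j)))) := by
        intro j
        simp [hz_def, map_add, map_smul, map_sub, smul_eq_mul]
      rw [show f v = f v + t₀ * (f v - f v) by ring]
      exact hmain.congr fun j => (heq j).symm
    have hFz : ∀ j, F (z j) = c := fun j => ht2 (ψ j)
    have := hFwlsc z v hzweak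
    rw [show (fun n => F (z n)) = fun _ => c from funext hFz, liminf_const] at this
    linarith
  -- squeeze: F (Φ k) → F v
  have htend : Tendsto (fun k => F (Φ k)) atTop (nhds (F v)) := by
    refine tendsto_of_tendsto_of_tendsto_of_le_of_le tendsto_const_nhds hFw ?_ ?_
    · exact fun k => hlow k
    · exact fun k => hupper k
  refine ⟨v, hvK, ?_, htend⟩
  intro v' hv'
  obtain ⟨w', hw', hwt'⟩ := happrox v' hv'
  have hFw' : Tendsto (fun k => F (w' k)) atTop (nhds (F v')) :=
    (hFcont.tendsto v').comp hwt'
  exact ge_of_tendsto' hFw' fun k => le_trans (hlow k) (hΦmin k (w' k) (hw' k))
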